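/- Let φ: ℤ_n → ℤ_n be the automorphism x ↦ rx where gcd(r, n) = 1, and let m be the multiplicative order of r modulo n. Then φ is a symmetric skew-morphism of ℤ_n if and only if m divides n and r ≡ 1 (mod m). -/

import Mathlib

/-- Let `φ : x ↦ rx` be an automorphism of `ℤ_n` (with `gcd(r,n) = 1`) of order `m`
(the multiplicative order of `r` mod `n`). Then `φ` is a symmetric skew-morphism of
`ℤ_n` — i.e. `m ∣ n` and `π(x) = −φ^{−x}(−1)` is a power function for `φ` — if and
only if `m ∣ n` and `r ≡ 1 (mod m)`. -/
theorem automorphism_symmetric_iff (n : ℕ) (hn : 0 < n) (r : ℕ)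
    (hr : Nat.Coprime r n) (m : ℕ)
    (hm : m = orderOf (ZMod.unitOfCoprime r hr)) :
    (m ∣ n ∧
      ∀ x y : ZMod n,
        (r : ZMod n) * (x + y) =
          (r : ZMod n) * x +
            (fun z : ZMod n => (r : ZMod n) * z)^[
              (-((((ZMod.unitOfCoprime r hr)⁻¹ ^ x.val : (ZMod n)ˣ) : ZMod n) * (-1))).val] y)
    ↔ (m ∣ n ∧ r ≡ 1 [MOD m]) := by
  haveI : NeZero n := ⟨hn.ne'⟩
  set u := ZMod.unitOfCoprime r hr with hu
  have hur : (u : ZMod n) = (r : ZMod n) := ZMod.coe_unitOfCoprime r hr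
  have hiter : ∀ (k : ℕ) (y : ZMod n),
      (fun z : ZMod n => (r : ZMod n) * z)^[k] y = (r : ZMod n) ^ k * y := by
    intro k y
    induction k with
    | zero => simp
    | succ k ih => rw [Function.iterate_succ_apply', ih]; ring
  have hmpos : 0 < m := hm ▸ orderOf_pos u
  -- exponent e x
  have hexp : ∀ x : ZMod n,
      (-((((u⁻¹ ^ x.val : (ZMod n)ˣ) : ZMod n)) * (-1))).val
        = (((u⁻¹ ^ x.val : (ZMod n)ˣ) : ZMod n)).val := by
    intro x; rw [mul_neg_one, neg_neg]
  constructor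
  · rintro ⟨hdvd, h⟩
    refine ⟨hdvd, ?_⟩
    -- from the equation at any x, y = 1, we get r = r ^ e x
    have key : ∀ x : ZMod n,
        (((u⁻¹ ^ x.val : (ZMod n)ˣ) : ZMod n)).val ≡ 1 [MOD m] := by
      intro x
      have := h x 1
      rw [hexp, hiter, mul_add, mul_one, mul_one] at this
      have heq := add_left_cancel this
      have hunits : u ^ (((u⁻¹ ^ x.val : (ZMod n)ˣ) : ZMod n)).val = u ^ 1 := by
        ext
        simpa [hur] using heq.symm
      have := (pow_eq_pow_iff_modEq).mp hunits
      rw [← hm] at this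
      exact this
    rcases eq_or_lt_of_le (show 1 ≤ m from hmpos) with h1 | h2
    · simp [← h1, Nat.modEq_one]
    -- m ≥ 2; use x with x.val = m - 1, then u⁻¹ ^ (m-1) = u
    have hmn : m ≤ n := Nat.le_of_dvd hn hdvd
    have hx : (((m - 1 : ℕ) : ZMod n)).val = m - 1 :=
      ZMod.val_natCast_of_lt (lt_of_lt_of_le (Nat.sub_lt hmpos one_pos) hmn)
    have hpow : u ^ (m - 1) = u⁻¹ := by
      have h1 : u * u ^ (m - 1) = 1 := by
        rw [← pow_succ', Nat.sub_add_cancel hmpos, hm, pow_orderOf_eq_one]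
      exact eq_inv_of_mul_eq_one_right h1
    have hinvpow : (u⁻¹) ^ (m - 1) = u := by
      rw [inv_pow, hpow, inv_inv]
    have := key ((m - 1 : ℕ) : ZMod n)
    rw [hx, hinvpow, hur] at this
    have hrval : (r : ZMod n).val ≡ r [MOD m] :=
      (Nat.ModEq.of_dvd hdvd (by rw [ZMod.val_natCast]; exact Nat.mod_modEq r n))
    exact (hrval.symm.trans this)
  · rintro ⟨hdvd, hr1⟩
    refine ⟨hdvd, ?_⟩
    intro x y
    rw [hexp, hiter]
    -- show r ^ e = r
    set k := x.val
    have hf : ∀ a : ZMod n, ((a.val : ZMod m)) = ZMod.castHom hdvd (ZMod m) a := by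
      intro a
      rw [ZMod.natCast_val, ZMod.castHom_apply]
    have hfu : ZMod.castHom hdvd (ZMod m) ((u : ZMod n)) = 1 := by
      rw [hur, map_natCast]
      have : ((r : ℕ) : ZMod m) = ((1 : ℕ) : ZMod m) :=
        (ZMod.natCast_eq_natCast_iff _ _ _).mpr hr1
      simpa using this
    have hfuinv : ZMod.castHom hdvd (ZMod m) ((u⁻¹ : (ZMod n)ˣ) : ZMod n) = 1 := by
      have : ((u⁻¹ : (ZMod n)ˣ) : ZMod n) * (u : ZMod n) = 1 := by
        rw [← Units.val_mul, inv_mul_cancel, Units.val_one]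
      have := congrArg (ZMod.castHom hdvd (ZMod m)) this
      rw [map_mul, hfu, mul_one, map_one] at this
      exact this
    have hemod : (((u⁻¹ ^ k : (ZMod n)ˣ) : ZMod n)).val ≡ 1 [MOD m] := by
      rw [← ZMod.natCast_eq_natCast_iff]
      push_cast
      rw [hf, map_pow, hfuinv, one_pow]
    have hpow : (r : ZMod n) ^ (((u⁻¹ ^ k : (ZMod n)ˣ) : ZMod n)).val = (r : ZMod n) := by
      have : u ^ (((u⁻¹ ^ k : (ZMod n)ˣ) : ZMod n)).val = u ^ 1 := by
        rw [pow_eq_pow_iff_modEq, ← hm]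
        exact hemod
      have := congrArg (Units.val) this
      simpa [hur] using this
    rw [hpow, mul_add]
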